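/- arXiv:2411.01481 — 2 statements merged into one kernel-verified Lean document; each statement's English description precedes it below -/
import Mathlib

section
/- Let A be a q×n complex matrix, W a nonzero n×q complex matrix, m a positive integer, and k = max(Ind(AW), Ind(WA)). Then A·A^{Ⓦ_m,W,†} is the oblique projector onto the range of (AW)^k along the null space of ((WA)^k)^*·(WA)^{m+1}·A^†; i.e., (A·A^{Ⓦ_m,W,†})^2 = A·A^{Ⓦ_m,W,†}, the range of A·A^{Ⓦ_m,W,†} equals the range of (AW)^k, and the null space of A·A^{Ⓦ_m,W,†} equals the null space of ((WA)^k)^*·(WA)^{m+1}·A^†. -/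
open Matrix

/-- Index of a square matrix: least `d` with `rank (B^d) = rank (B^(d+1))`. -/
noncomputable def matInd {ι : Type*} [Fintype ι] [DecidableEq ι] (B : Matrix ι ι ℂ) : ℕ :=
  sInf {d : ℕ | (B ^ d).rank = (B ^ (d + 1)).rank}

/-- `X` is the Moore-Penrose inverse of `A` (four Penrose equations). -/
noncomputable def IsMP {ι κ : Type*} [Fintype ι] [Fintype κ] (A : Matrix ι κ ℂ) (X : Matrix κ ι ℂ) : Prop :=
  A * X * A = A ∧ X * A * X = X ∧ (A * X)ᴴ = A * X ∧ (X * A)ᴴ = X * A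

/-- Column space (range) of a matrix. -/
noncomputable def mrange {ι κ : Type*} [Fintype κ] (M : Matrix ι κ ℂ) : Submodule ℂ (ι → ℂ) :=
  LinearMap.range M.mulVecLin

/-- Null space of a matrix. -/
noncomputable def mker {ι κ : Type*} [Fintype κ] (M : Matrix ι κ ℂ) : Submodule ℂ (κ → ℂ) :=
  LinearMap.ker M.mulVecLin

/-- `X` is the core-EP inverse of `B`. -/
noncomputable def IsCoreEP {ι : Type*} [Fintype ι] [DecidableEq ι] (B X : Matrix ι ι ℂ) : Prop :=
  X * B * X = X ∧ mrange X = mrange (B ^ matInd B) ∧ mrange Xᴴ = mrange (B ^ matInd B)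

/-- `X` is the Drazin inverse of `B`. -/
noncomputable def IsDrazin {ι : Type*} [Fintype ι] [DecidableEq ι] (B X : Matrix ι ι ℂ) : Prop :=
  X * B * X = X ∧ B * X = X * B ∧ B ^ (matInd B + 1) * X = B ^ matInd B

/-- `X` is the group inverse of `B`. -/
noncomputable def IsGroupInv {ι : Type*} [Fintype ι] (B X : Matrix ι ι ℂ) : Prop :=
  B * X * B = B ∧ X * B * X = X ∧ B * X = X * B

/-- Frobenius norm of a matrix. -/
noncomputable def frobNorm {ι κ : Type*} [Fintype ι] [Fintype κ] (M : Matrix ι κ ℂ) : ℝ :=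
  Real.sqrt (∑ i, ∑ j, ‖M i j‖ ^ 2)

set_option linter.unusedSectionVars false
set_option linter.unusedVariables false

section aux
variable {ι κ μ : Type*} [Fintype ι] [Fintype κ] [Fintype μ]

lemma aux_mrange_mul (M : Matrix ι κ ℂ) (N : Matrix κ μ ℂ) :
    mrange (M * N) = (mrange N).map M.mulVecLin := by
  rw [mrange, mrange, Matrix.mulVecLin_mul, LinearMap.range_comp]

lemma aux_mrange_mul_le (M : Matrix ι κ ℂ) (N : Matrix κ μ ℂ) :
    mrange (M * N) ≤ mrange M := by
  rw [aux_mrange_mul]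
  rintro x ⟨y, -, rfl⟩
  exact ⟨y, rfl⟩

lemma aux_mker_mul_le (M : Matrix ι κ ℂ) (N : Matrix κ μ ℂ) :
    mker N ≤ mker (M * N) := by
  intro v hv
  simp only [mker, LinearMap.mem_ker, Matrix.mulVecLin_apply] at hv ⊢
  rw [← Matrix.mulVec_mulVec, hv, Matrix.mulVec_zero]

lemma aux_mker_comp (M : Matrix ι κ ℂ) (N : Matrix κ μ ℂ) :
    mker (M * N) = Submodule.comap N.mulVecLin (mker M) := by
  rw [mker, mker, Matrix.mulVecLin_mul, LinearMap.ker_comp]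

lemma aux_ext_mulVec [DecidableEq κ] {M N : Matrix ι κ ℂ} (h : ∀ v, M *ᵥ v = N *ᵥ v) :
    M = N := by
  ext i j
  have := congrFun (h (Pi.single j 1)) i
  simpa using this

lemma aux_mul_eq_self [DecidableEq κ] {M : Matrix ι ι ℂ} {N : Matrix ι κ ℂ}
    (hM : M * M = M) (h : mrange N ≤ mrange M) : M * N = N := by
  apply aux_ext_mulVec
  intro v
  have hv : N *ᵥ v ∈ mrange M := h ⟨v, Matrix.mulVecLin_apply _ _⟩
  obtain ⟨w, hw⟩ := hv
  rw [Matrix.mulVecLin_apply] at hw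
  calc (M * N) *ᵥ v = M *ᵥ (N *ᵥ v) := by rw [← Matrix.mulVec_mulVec]
    _ = M *ᵥ (M *ᵥ w) := by rw [hw]
    _ = (M * M) *ᵥ w := by rw [Matrix.mulVec_mulVec]
    _ = M *ᵥ w := by rw [hM]
    _ = N *ᵥ v := hw

lemma aux_mulVec_eq_zero_iff [DecidableEq ι] (M : Matrix ι κ ℂ) (v : κ → ℂ) :
    M *ᵥ v = 0 ↔ ∀ u ∈ mrange Mᴴ, star u ⬝ᵥ v = 0 := by
  constructor
  · rintro h u ⟨w, rfl⟩
    rw [Matrix.mulVecLin_apply, Matrix.star_mulVec, Matrix.conjTranspose_conjTranspose,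
      ← Matrix.dotProduct_mulVec, h, dotProduct_zero]
  · intro h
    funext i
    have := h (Mᴴ *ᵥ Pi.single i 1) ⟨Pi.single i 1, Matrix.mulVecLin_apply _ _⟩
    rw [Matrix.star_mulVec, Matrix.conjTranspose_conjTranspose,
      ← Matrix.dotProduct_mulVec] at this
    simp only [dotProduct, Pi.star_apply, Pi.single_apply, apply_ite (star : ℂ → ℂ),
      star_one, star_zero, ite_mul, one_mul, zero_mul, Finset.sum_ite_eq,
      Finset.mem_univ, if_true] at this
    simpa using this

lemma aux_mker_eq [DecidableEq ι] [DecidableEq μ] {M : Matrix ι κ ℂ} {N : Matrix μ κ ℂ}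
    (h : mrange Mᴴ = mrange Nᴴ) : mker M = mker N := by
  ext v
  simp only [mker, LinearMap.mem_ker, Matrix.mulVecLin_apply]
  rw [aux_mulVec_eq_zero_iff, aux_mulVec_eq_zero_iff, h]

lemma aux_rank_eq (M : Matrix ι κ ℂ) : M.rank = Module.finrank ℂ (mrange M) := rfl

lemma aux_exists_ind [DecidableEq ι] (B : Matrix ι ι ℂ) :
    ∃ d, (B ^ d).rank = (B ^ (d + 1)).rank := by
  by_contra hc
  push_neg at hc
  have hlt : ∀ d, (B ^ (d + 1)).rank < (B ^ d).rank := by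
    intro d
    refine lt_of_le_of_ne ?_ fun e => hc d e.symm
    rw [pow_succ]
    exact Matrix.rank_mul_le_left _ _
  have key : ∀ d, (B ^ d).rank + d ≤ (B ^ 0).rank := by
    intro d
    induction d with
    | zero => simp
    | succ d ih => have := hlt d; omega
  have := key ((B ^ 0).rank + 1)
  omega

lemma aux_ind_mem [DecidableEq ι] (B : Matrix ι ι ℂ) :
    (B ^ matInd B).rank = (B ^ (matInd B + 1)).rank :=
  Nat.sInf_mem (aux_exists_ind B)

lemma aux_mrange_pow_stab [DecidableEq ι] (B : Matrix ι ι ℂ) :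
    ∀ j, matInd B ≤ j → mrange (B ^ j) = mrange (B ^ matInd B) := by
  have base : mrange (B ^ (matInd B + 1)) = mrange (B ^ matInd B) := by
    have hle : mrange (B ^ (matInd B + 1)) ≤ mrange (B ^ matInd B) := by
      rw [pow_succ]; exact aux_mrange_mul_le _ _
    refine Submodule.eq_of_le_of_finrank_le hle ?_
    rw [← aux_rank_eq, ← aux_rank_eq]
    exact le_of_eq (aux_ind_mem B)
  intro j hj
  induction j, hj using Nat.le_induction with
  | base => rfl
  | succ j hj ih =>
    calc mrange (B ^ (j + 1)) = (mrange (B ^ j)).map B.mulVecLin := by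
          rw [pow_succ']; exact aux_mrange_mul B (B ^ j)
      _ = (mrange (B ^ matInd B)).map B.mulVecLin := by rw [ih]
      _ = mrange (B ^ (matInd B + 1)) := by rw [pow_succ']; exact (aux_mrange_mul _ _).symm
      _ = mrange (B ^ matInd B) := base

lemma aux_comm [DecidableEq ι] [DecidableEq κ] (A : Matrix ι κ ℂ) (W : Matrix κ ι ℂ) (j : ℕ) :
    A * (W * A) ^ j = (A * W) ^ j * A := by
  induction j with
  | zero => simp
  | succ j ih =>
    rw [pow_succ, ← Matrix.mul_assoc, ih, pow_succ]
    simp only [Matrix.mul_assoc]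

end aux

theorem stmt5 {q n : ℕ} (A : Matrix (Fin q) (Fin n) ℂ) (W : Matrix (Fin n) (Fin q) ℂ)
    (hW : W ≠ 0) (m : ℕ) (hm : 0 < m) (k : ℕ)
    (hk : k = max (matInd (A * W)) (matInd (W * A)))
    (Adag : Matrix (Fin n) (Fin q) ℂ) (hAdag : IsMP A Adag)
    (WAcep : Matrix (Fin n) (Fin n) ℂ) (hWAcep : IsCoreEP (W * A) WAcep)
    (AepW AWGm : Matrix (Fin q) (Fin n) ℂ) (AWGMP : Matrix (Fin n) (Fin q) ℂ)
    (hAepW : AepW = A * (WAcep * WAcep))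
    (hAWGm : AWGm = (AepW * W) ^ m * AepW * (W * A) ^ m)
    (hAWGMP : AWGMP = W * AWGm * W * A * Adag) :
    (A * AWGMP) * (A * AWGMP) = A * AWGMP ∧
      mrange (A * AWGMP) = mrange ((A * W) ^ k) ∧
      mker (A * AWGMP) = mker (((W * A) ^ k)ᴴ * (W * A) ^ (m + 1) * Adag) := by
  obtain ⟨hA1, hA2, hA3, hA4⟩ := hAdag
  obtain ⟨hX1, hX2, hX3⟩ := hWAcep
  set X := WAcep with hXdef
  set B := W * A with hB
  set C := A * W with hC
  have hdk : matInd B ≤ k := by rw [hk]; exact le_max_right _ _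
  have hck : matInd C ≤ k := by rw [hk]; exact le_max_left _ _
  have stabB := aux_mrange_pow_stab B
  have stabC := aux_mrange_pow_stab C
  have hfold : ∀ {μ : Type} (Z : Matrix (Fin n) μ ℂ), W * (A * Z) = B * Z := by
    intro μ Z; rw [← Matrix.mul_assoc, ← hB]
  have hA1' : A * (Adag * A) = A := by rw [← Matrix.mul_assoc]; exact hA1
  -- idempotents
  have hBXidem : (B * X) * (B * X) = B * X := by
    calc (B * X) * (B * X) = B * (X * B * X) := by simp only [Matrix.mul_assoc]
      _ = B * X := by rw [hX1]
  have hXBidem : (X * B) * (X * B) = X * B := by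
    calc (X * B) * (X * B) = (X * B * X) * B := by simp only [Matrix.mul_assoc]
      _ = X * B := by rw [hX1]
  have hrBX : mrange (B * X) = mrange X := by
    rw [aux_mrange_mul, hX2, ← aux_mrange_mul, ← pow_succ', stabB _ (Nat.le_succ _)]
  have hBX2 : B * (X * X) = X := by
    have h := aux_mul_eq_self hBXidem hrBX.ge
    rw [Matrix.mul_assoc] at h
    exact h
  have hXBpow : ∀ j, matInd B ≤ j → X * B ^ (j + 1) = B ^ j := by
    intro j hj
    have hr : mrange (B ^ j) ≤ mrange (X * B) := by
      rw [stabB j hj, ← hX2]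
      calc mrange X = mrange (X * B * X) := by rw [hX1]
        _ ≤ mrange (X * B) := aux_mrange_mul_le _ _
    have h := aux_mul_eq_self hXBidem hr
    rw [Matrix.mul_assoc] at h
    rw [pow_succ']
    exact h
  have hBXs : ∀ j, B * X ^ (j + 2) = X ^ (j + 1) := by
    intro j
    have h2 : X ^ (j + 2) = (X * X) * X ^ j := by
      rw [show j + 2 = 2 + j from by omega, pow_add, pow_two]
    rw [h2, ← Matrix.mul_assoc, hBX2, ← pow_succ']
  have hBpowX : ∀ i, B ^ i * X ^ (i + 1) = X := by
    intro i; induction i with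
    | zero => simp
    | succ i ih =>
      rw [pow_succ, Matrix.mul_assoc, show i + 1 + 1 = i + 2 from rfl, hBXs i]
      exact ih
  have hXpowBpow : ∀ i j, matInd B ≤ j → X ^ i * B ^ (i + j) = B ^ j := by
    intro i; induction i with
    | zero => intro j hj; simp
    | succ i ih =>
      intro j hj
      rw [show i + 1 + j = i + (j + 1) from by omega, pow_succ', Matrix.mul_assoc,
        ih (j + 1) (le_trans hj (Nat.le_succ _)), hXBpow j hj]
  -- structural computation of AWGMP
  have hAepWW : ∀ j, (AepW * W) ^ (j + 1) = A * X ^ (j + 2) * W := by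
    intro j; induction j with
    | zero =>
      simp only [Nat.zero_add, pow_one, hAepW]
      rw [pow_two]
    | succ j ih =>
      rw [pow_succ, ih, hAepW]
      simp only [Matrix.mul_assoc]
      rw [hfold]
      have h9 : B * (X * (X * W)) = X * W := by
        calc B * (X * (X * W)) = (B * (X * X)) * W := by simp only [Matrix.mul_assoc]
          _ = X * W := by rw [hBX2]
      rw [h9]
      have h10 : X ^ (j + 2) * (X * W) = X ^ (j + 1 + 2) * W := by
        rw [← Matrix.mul_assoc, ← pow_succ, show j + 2 + 1 = j + 1 + 2 from by omega]
      rw [h10]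
  have hAWGm' : AWGm = A * X ^ (m + 2) * B ^ m := by
    obtain ⟨m', rfl⟩ : ∃ m', m = m' + 1 := ⟨m - 1, by omega⟩
    rw [hAWGm, hAepWW m', hAepW]
    simp only [Matrix.mul_assoc]
    rw [hfold]
    have h7 : B * (X * (X * B ^ (m' + 1))) = X * B ^ (m' + 1) := by
      calc B * (X * (X * B ^ (m' + 1))) = (B * (X * X)) * B ^ (m' + 1) := by
            simp only [Matrix.mul_assoc]
        _ = X * B ^ (m' + 1) := by rw [hBX2]
    rw [h7]
    have h8 : X ^ (m' + 2) * (X * B ^ (m' + 1)) = X ^ (m' + 1 + 2) * B ^ (m' + 1) := by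
      rw [← Matrix.mul_assoc, ← pow_succ, show m' + 2 + 1 = m' + 1 + 2 from by omega]
    rw [h8]
  have hAWGMP' : AWGMP = X ^ (m + 1) * B ^ (m + 1) * Adag := by
    rw [hAWGMP, hAWGm']
    simp only [Matrix.mul_assoc]
    rw [hfold, hfold]
    have h11 : B ^ m * (B * Adag) = B ^ (m + 1) * Adag := by
      rw [← Matrix.mul_assoc, ← pow_succ]
    rw [h11, ← Matrix.mul_assoc, hBXs m]
  -- key helper identities
  have hBdagA : B ^ (m + 1) * Adag * A = B ^ (m + 1) := by
    rw [hB, pow_succ]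
    simp only [Matrix.mul_assoc]
    rw [hA1']
  have hBdA : ∀ (Y : Matrix (Fin n) (Fin q) ℂ),
      B ^ (m + 1) * (Adag * (A * Y)) = B ^ (m + 1) * Y := by
    intro Y
    calc B ^ (m + 1) * (Adag * (A * Y)) = (B ^ (m + 1) * Adag * A) * Y := by
          simp only [Matrix.mul_assoc]
      _ = B ^ (m + 1) * Y := by rw [hBdagA]
  have hBmX : B ^ (m + 1) * X ^ (m + 1) = B * X := by
    conv_lhs => rw [pow_succ']
    rw [Matrix.mul_assoc, hBpowX m]
  have hBmXZ : ∀ (Z : Matrix (Fin n) (Fin q) ℂ),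
      B ^ (m + 1) * (X ^ (m + 1) * Z) = B * (X * Z) := by
    intro Z
    calc B ^ (m + 1) * (X ^ (m + 1) * Z) = (B ^ (m + 1) * X ^ (m + 1)) * Z :=
          (Matrix.mul_assoc _ _ _).symm
      _ = (B * X) * Z := by rw [hBmX]
      _ = B * (X * Z) := Matrix.mul_assoc _ _ _
  have hX1Z : ∀ {μ : Type} (Z : Matrix (Fin n) μ ℂ), X * (B * (X * Z)) = X * Z := by
    intro μ Z
    calc X * (B * (X * Z)) = (X * B * X) * Z := by simp only [Matrix.mul_assoc]
      _ = X * Z := by rw [hX1]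
  have hXBXZ : ∀ (Z : Matrix (Fin n) (Fin q) ℂ),
      X ^ (m + 1) * (B * (X * Z)) = X ^ (m + 1) * Z := by
    intro Z
    rw [pow_succ, Matrix.mul_assoc, hX1Z, ← Matrix.mul_assoc]
  refine ⟨?_, ?_, ?_⟩
  · -- idempotency
    rw [hAWGMP']
    simp only [Matrix.mul_assoc]
    rw [hBdA, hBmXZ, hXBXZ]
  · -- range
    have hrangeBk : mrange X = mrange (B ^ (k + 1)) := by
      rw [hX2, ← stabB (k + 1) (le_trans hdk (Nat.le_succ _))]
    have hCk' : mrange (C ^ (k + 1)) = mrange (C ^ k) := by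
      rw [stabC (k + 1) (le_trans hck (Nat.le_succ _)), stabC k hck]
    have hcommk : A * B ^ (k + 1) = C ^ (k + 1) * A := by
      rw [hB, hC]; exact aux_comm A W (k + 1)
    have hfact : A * AWGMP = (A * X) * (X ^ m * (B ^ (m + 1) * Adag)) := by
      rw [hAWGMP', show X ^ (m + 1) = X * X ^ m from pow_succ' X m]
      simp only [Matrix.mul_assoc]
    have hCk1 : C ^ (k + 1) = A * (B ^ k * W) := by
      rw [hB, hC, pow_succ, ← Matrix.mul_assoc, ← aux_comm, Matrix.mul_assoc]
    have h6 : X ^ (m + 1) * (B ^ (m + 1) * (B ^ k * W)) = B ^ k * W := by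
      calc X ^ (m + 1) * (B ^ (m + 1) * (B ^ k * W))
          = (X ^ (m + 1) * (B ^ (m + 1) * B ^ k)) * W := by simp only [Matrix.mul_assoc]
        _ = (X ^ (m + 1) * B ^ (m + 1 + k)) * W := by rw [← pow_add]
        _ = B ^ k * W := by rw [hXpowBpow (m + 1) k hdk]
    have hPC : (A * AWGMP) * C ^ (k + 1) = C ^ (k + 1) := by
      calc (A * AWGMP) * C ^ (k + 1)
          = (A * (X ^ (m + 1) * B ^ (m + 1) * Adag)) * (A * (B ^ k * W)) := by
            rw [hAWGMP', hCk1]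
        _ = A * (X ^ (m + 1) * (B ^ (m + 1) * (Adag * (A * (B ^ k * W))))) := by
            simp only [Matrix.mul_assoc]
        _ = A * (X ^ (m + 1) * (B ^ (m + 1) * (B ^ k * W))) := by rw [hBdA]
        _ = A * (B ^ k * W) := by rw [h6]
        _ = C ^ (k + 1) := hCk1.symm
    apply le_antisymm
    · rw [hfact]
      calc mrange ((A * X) * (X ^ m * (B ^ (m + 1) * Adag)))
          ≤ mrange (A * X) := aux_mrange_mul_le _ _
        _ = (mrange X).map A.mulVecLin := aux_mrange_mul _ _
        _ = (mrange (B ^ (k + 1))).map A.mulVecLin := by rw [hrangeBk]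
        _ = mrange (A * B ^ (k + 1)) := (aux_mrange_mul _ _).symm
        _ = mrange (C ^ (k + 1) * A) := by rw [hcommk]
        _ ≤ mrange (C ^ (k + 1)) := aux_mrange_mul_le _ _
        _ = mrange (C ^ k) := hCk'
    · calc mrange (C ^ k) = mrange (C ^ (k + 1)) := hCk'.symm
        _ = mrange ((A * AWGMP) * C ^ (k + 1)) := by rw [hPC]
        _ ≤ mrange (A * AWGMP) := aux_mrange_mul_le _ _
  · -- kernel
    have hkerX : mker X = mker ((B ^ k)ᴴ) := by
      apply aux_mker_eq
      rw [Matrix.conjTranspose_conjTranspose, hX3, stabB k hdk]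
    have hkerAX : mker (A * X ^ (m + 1)) = mker X := by
      apply le_antisymm
      · obtain ⟨m', rfl⟩ : ∃ m', m = m' + 1 := ⟨m - 1, by omega⟩
        have hZ : (B ^ m' * W) * (A * X ^ (m' + 1 + 1)) = X := by
          simp only [Matrix.mul_assoc]
          rw [hfold, ← Matrix.mul_assoc, ← pow_succ]
          exact hBpowX (m' + 1)
        intro v hv
        have h := aux_mker_mul_le (B ^ m' * W) (A * X ^ (m' + 1 + 1)) hv
        rw [hZ] at h
        exact h
      · have hfac : A * X ^ (m + 1) = (A * X ^ m) * X := by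
          rw [pow_succ, ← Matrix.mul_assoc]
        rw [hfac]
        exact aux_mker_mul_le _ _
    have hPfac : A * AWGMP = (A * X ^ (m + 1)) * (B ^ (m + 1) * Adag) := by
      rw [hAWGMP']
      simp only [Matrix.mul_assoc]
    have hQfac : (B ^ k)ᴴ * B ^ (m + 1) * Adag = (B ^ k)ᴴ * (B ^ (m + 1) * Adag) :=
      Matrix.mul_assoc _ _ _
    rw [hPfac, hQfac, aux_mker_comp (A * X ^ (m + 1)) (B ^ (m + 1) * Adag),
      aux_mker_comp ((B ^ k)ᴴ) (B ^ (m + 1) * Adag), hkerAX, hkerX]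
end

section
/- Let A be a q×n complex matrix, W a nonzero n×q complex matrix, m a positive integer, and k = max(Ind(AW), Ind(WA)). Then for an n×q matrix X the following are equivalent: (1) X = A^{Ⓦ_m,W,†}; (2) A·X = (A^{⊕,W}·W)^{m-1}·A^{⊕,W}·(W·A)^m·W·A·A^† and X = W·A^{D,W}·W·A·X; (3) A·X = (A^{⊕,W}·W)^{m-1}·A^{⊕,W}·(W·A)^m·W·A·A^† and range(X) ⊆ range(W·A^{D,W}). -/
open Matrix

lemma mrange_mul {a b c : Type*} [Fintype b] [Fintype c] (M : Matrix a b ℂ) (N : Matrix b c ℂ) :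
    mrange (M * N) = (mrange N).map M.mulVecLin := by
  simp [mrange, Matrix.mulVecLin_mul, LinearMap.range_comp]

lemma mrange_mul_le {a b c : Type*} [Fintype b] [Fintype c] (M : Matrix a b ℂ) (N : Matrix b c ℂ) :
    mrange (M * N) ≤ mrange M := by
  rw [mrange_mul]
  rintro x ⟨y, -, rfl⟩
  exact LinearMap.mem_range_self _ _

lemma projEq {a b c : Type*} [Fintype a] [Fintype b] [Fintype c] [DecidableEq c]
    (P : Matrix a a ℂ) (M : Matrix a b ℂ) (X : Matrix a c ℂ)
    (hPM : P * M = M) (hX : mrange X ≤ mrange M) : P * X = X := by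
  ext i j
  obtain ⟨u, hu⟩ := hX (LinearMap.mem_range_self X.mulVecLin (Pi.single j 1))
  have hu' : M *ᵥ u = X *ᵥ Pi.single j 1 := hu
  have h1 : (P * X) *ᵥ Pi.single j 1 = X *ᵥ Pi.single j 1 := by
    rw [← Matrix.mulVec_mulVec, ← hu', Matrix.mulVec_mulVec, hPM, hu']
  have := congrFun h1 i
  simpa [Matrix.mulVec_single] using this

lemma rank_stab {ι : Type*} [Fintype ι] [DecidableEq ι] (B : Matrix ι ι ℂ) :
    ((B ^ matInd B).rank = (B ^ (matInd B + 1)).rank) := by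
  have hne : {d : ℕ | (B ^ d).rank = (B ^ (d + 1)).rank}.Nonempty := by
    by_contra h
    rw [Set.not_nonempty_iff_eq_empty] at h
    have hlt : ∀ d : ℕ, (B ^ (d + 1)).rank < (B ^ d).rank := by
      intro d
      have hne : (B ^ d).rank ≠ (B ^ (d + 1)).rank := by
        intro hd; exact absurd (Set.mem_setOf_eq ▸ hd : d ∈ _) (h ▸ Set.notMem_empty d)
      have hle : (B ^ (d + 1)).rank ≤ (B ^ d).rank := by
        rw [pow_succ]; exact Matrix.rank_mul_le_left _ _
      omega
    have key : ∀ d : ℕ, (B ^ d).rank + d ≤ (B ^ 0).rank := by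
      intro d
      induction d with
      | zero => omega
      | succ d ih => have := hlt d; omega
    have := key ((B ^ 0).rank + 1)
    omega
  exact Nat.sInf_mem hne

lemma mrange_pow_succ {ι : Type*} [Fintype ι] [DecidableEq ι] (B : Matrix ι ι ℂ) :
    mrange (B ^ (matInd B + 1)) = mrange (B ^ matInd B) := by
  apply Submodule.eq_of_le_of_finrank_le
  · rw [pow_succ]; exact mrange_mul_le _ _
  · exact le_of_eq (rank_stab B)

theorem stmt7 {q n : ℕ} (A : Matrix (Fin q) (Fin n) ℂ) (W : Matrix (Fin n) (Fin q) ℂ)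
    (hW : W ≠ 0) (m : ℕ) (hm : 0 < m) (k : ℕ)
    (hk : k = max (matInd (A * W)) (matInd (W * A)))
    (Adag : Matrix (Fin n) (Fin q) ℂ) (hAdag : IsMP A Adag)
    (WAD : Matrix (Fin n) (Fin n) ℂ) (hWAD : IsDrazin (W * A) WAD)
    (WAcep : Matrix (Fin n) (Fin n) ℂ) (hWAcep : IsCoreEP (W * A) WAcep)
    (ADW AepW AWGm : Matrix (Fin q) (Fin n) ℂ) (AWGMP : Matrix (Fin n) (Fin q) ℂ)
    (hADW : ADW = A * (WAD * WAD))
    (hAepW : AepW = A * (WAcep * WAcep))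
    (hAWGm : AWGm = (AepW * W) ^ m * AepW * (W * A) ^ m)
    (hAWGMP : AWGMP = W * AWGm * W * A * Adag)
    (X : Matrix (Fin n) (Fin q) ℂ) :
    (X = AWGMP ↔
      (A * X = (AepW * W) ^ (m - 1) * AepW * (W * A) ^ m * W * A * Adag ∧
        X = W * ADW * W * A * X)) ∧
    (X = AWGMP ↔
      (A * X = (AepW * W) ^ (m - 1) * AepW * (W * A) ^ m * W * A * Adag ∧
        mrange X ≤ mrange (W * ADW))) := by
  have hT1 : WAcep * (W * A) * WAcep = WAcep := hWAcep.1
  have hTr : mrange WAcep = mrange ((W * A) ^ matInd (W * A)) := hWAcep.2.1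
  have hD1 : WAD * (W * A) * WAD = WAD := hWAD.1
  have hD2 : (W * A) * WAD = WAD * (W * A) := hWAD.2.1
  have hD3 : (W * A) ^ (matInd (W * A) + 1) * WAD = (W * A) ^ matInd (W * A) := hWAD.2.2
  have hRpow : mrange ((W * A) ^ (matInd (W * A) + 1)) = mrange ((W * A) ^ matInd (W * A)) :=
    mrange_pow_succ _
  have hBT : mrange ((W * A) * WAcep) = mrange WAcep := by
    rw [mrange_mul, hTr, ← mrange_mul, ← pow_succ', hRpow]
  have hP : ((W * A) * WAcep) * ((W * A) * WAcep) = (W * A) * WAcep := by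
    calc ((W * A) * WAcep) * ((W * A) * WAcep)
        = (W * A) * (WAcep * (W * A) * WAcep) := by simp only [Matrix.mul_assoc]
      _ = (W * A) * WAcep := by rw [hT1]
  have key1 : (W * A) * WAcep * WAcep = WAcep :=
    projEq ((W * A) * WAcep) ((W * A) * WAcep) WAcep hP (le_of_eq hBT.symm)
  have hcomm : Commute WAD (W * A) := hD2.symm
  have hPM2 : (WAD * (W * A)) * ((W * A) ^ matInd (W * A)) = (W * A) ^ matInd (W * A) := by
    calc (WAD * (W * A)) * ((W * A) ^ matInd (W * A))
        = WAD * (W * A) ^ (matInd (W * A) + 1) := by rw [Matrix.mul_assoc, ← pow_succ']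
      _ = (W * A) ^ (matInd (W * A) + 1) * WAD := hcomm.pow_right _
      _ = (W * A) ^ matInd (W * A) := hD3
  have key2 : WAD * (W * A) * WAcep = WAcep := projEq _ _ _ hPM2 (le_of_eq hTr)
  have hWE : W * AepW = WAcep := by
    rw [hAepW]
    calc W * (A * (WAcep * WAcep)) = (W * A) * WAcep * WAcep := by simp only [Matrix.mul_assoc]
      _ = WAcep := key1
  have h3 : W * ADW = WAD := by
    rw [hADW]
    calc W * (A * (WAD * WAD)) = ((W * A) * WAD) * WAD := by simp only [Matrix.mul_assoc]
      _ = (WAD * (W * A)) * WAD := by rw [hD2]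
      _ = WAD := hD1
  have swap : ∀ j : ℕ, W * (AepW * W) ^ j = WAcep ^ j * W := by
    intro j
    induction j with
    | zero => simp
    | succ j ih =>
      calc W * (AepW * W) ^ (j + 1) = (W * (AepW * W) ^ j) * (AepW * W) := by
            rw [pow_succ, ← Matrix.mul_assoc]
        _ = (WAcep ^ j * W) * (AepW * W) := by rw [ih]
        _ = WAcep ^ j * (W * AepW) * W := by simp only [Matrix.mul_assoc]
        _ = WAcep ^ j * WAcep * W := by rw [hWE]
        _ = WAcep ^ (j + 1) * W := by rw [pow_succ]
  have swap2 : ∀ j : ℕ, (AepW * W) ^ j * AepW = AepW * WAcep ^ j := by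
    intro j
    induction j with
    | zero => simp
    | succ j ih =>
      calc (AepW * W) ^ (j + 1) * AepW = (AepW * W) * ((AepW * W) ^ j * AepW) := by
            rw [pow_succ']; simp only [Matrix.mul_assoc]
        _ = (AepW * W) * (AepW * WAcep ^ j) := by rw [ih]
        _ = AepW * (W * AepW) * WAcep ^ j := by simp only [Matrix.mul_assoc]
        _ = AepW * WAcep * WAcep ^ j := by rw [hWE]
        _ = AepW * WAcep ^ (j + 1) := by rw [Matrix.mul_assoc, ← pow_succ']
  have h1 : AWGMP = WAcep ^ (m + 1) * (W * A) ^ m * W * A * Adag := by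
    rw [hAWGMP, hAWGm]
    have hh : W * ((AepW * W) ^ m * AepW * (W * A) ^ m)
        = WAcep ^ (m + 1) * (W * A) ^ m := by
      calc W * ((AepW * W) ^ m * AepW * (W * A) ^ m)
          = (W * (AepW * W) ^ m) * AepW * (W * A) ^ m := by simp only [Matrix.mul_assoc]
        _ = (WAcep ^ m * W) * AepW * (W * A) ^ m := by rw [swap m]
        _ = WAcep ^ m * (W * AepW) * (W * A) ^ m := by simp only [Matrix.mul_assoc]
        _ = WAcep ^ m * WAcep * (W * A) ^ m := by rw [hWE]
        _ = WAcep ^ (m + 1) * (W * A) ^ m := by rw [pow_succ]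
    rw [hh]
  have hmm' : (AepW * W) ^ (m - 1) * AepW = A * WAcep ^ (m + 1) := by
    rw [swap2, hAepW]
    calc A * (WAcep * WAcep) * WAcep ^ (m - 1)
        = A * (WAcep * (WAcep * WAcep ^ (m - 1))) := by simp only [Matrix.mul_assoc]
      _ = A * WAcep ^ (m + 1) := by
          rw [← pow_succ', ← pow_succ']
          congr 2
          omega
  have h2 : (AepW * W) ^ (m - 1) * AepW * (W * A) ^ m * W * A * Adag
      = A * (WAcep ^ (m + 1) * (W * A) ^ m * W * A * Adag) := by
    rw [hmm']
    simp only [Matrix.mul_assoc]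
  have hDT : WAD * (W * A) * WAcep ^ (m + 1) = WAcep ^ (m + 1) := by
    rw [pow_succ', ← Matrix.mul_assoc, key2]
  have h4 : WAD * W * A * (WAcep ^ (m + 1) * (W * A) ^ m * W * A * Adag)
      = WAcep ^ (m + 1) * (W * A) ^ m * W * A * Adag := by
    calc WAD * W * A * (WAcep ^ (m + 1) * (W * A) ^ m * W * A * Adag)
        = (WAD * (W * A) * WAcep ^ (m + 1)) * (W * A) ^ m * W * A * Adag := by
          simp only [Matrix.mul_assoc]
      _ = WAcep ^ (m + 1) * (W * A) ^ m * W * A * Adag := by rw [hDT]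
  have h6 : mrange (WAcep ^ (m + 1) * (W * A) ^ m * W * A * Adag) ≤ mrange WAD := by
    rw [← h4]
    have hh : WAD * W * A * (WAcep ^ (m + 1) * (W * A) ^ m * W * A * Adag)
        = WAD * (W * (A * (WAcep ^ (m + 1) * (W * A) ^ m * W * A * Adag))) := by
      simp only [Matrix.mul_assoc]
    rw [hh]
    exact mrange_mul_le _ _
  constructor
  · constructor
    · rintro rfl
      refine ⟨?_, ?_⟩
      · rw [h1, h2]
      · rw [h1, h3, h4]
    · rintro ⟨ha, hb⟩
      rw [h1]
      have hax : A * X = A * (WAcep ^ (m + 1) * (W * A) ^ m * W * A * Adag) := ha.trans h2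
      calc X = W * ADW * W * A * X := hb
        _ = WAD * (W * (A * X)) := by rw [h3]; simp only [Matrix.mul_assoc]
        _ = WAD * (W * (A * (WAcep ^ (m + 1) * (W * A) ^ m * W * A * Adag))) := by rw [hax]
        _ = WAcep ^ (m + 1) * (W * A) ^ m * W * A * Adag := by
            rw [← Matrix.mul_assoc, ← Matrix.mul_assoc]; exact h4
  · constructor
    · rintro rfl
      refine ⟨?_, ?_⟩
      · rw [h1, h2]
      · rw [h1, h3]; exact h6
    · rintro ⟨ha, hr⟩
      rw [h3] at hr
      have hx : WAD * (W * A) * X = X := projEq _ _ _ hD1 hr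
      have hax : A * X = A * (WAcep ^ (m + 1) * (W * A) ^ m * W * A * Adag) := ha.trans h2
      rw [h1]
      calc X = WAD * (W * A) * X := hx.symm
        _ = WAD * (W * (A * X)) := by simp only [Matrix.mul_assoc]
        _ = WAD * (W * (A * (WAcep ^ (m + 1) * (W * A) ^ m * W * A * Adag))) := by rw [hax]
        _ = WAcep ^ (m + 1) * (W * A) ^ m * W * A * Adag := by
            rw [← Matrix.mul_assoc, ← Matrix.mul_assoc]; exact h4
end
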